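/- Let Γ_m ⊆ Γ_1 be subgroups of SL₂ defined by congruence conditions modulo Np^m and Np respectively (upper-left and lower-right entries ≡ 1, lower-left entry ≡ 0 modulo Np^m, resp. Np). Suppose Q = c x² - 2a x y - b y² and Q' = c' x² - 2a' x y - b' y² are binary quadratic forms with integer coefficients satisfying Np^m | c, Np^m | 2a, b ≡ b' ≡ t (mod Np^m) for some fixed unit t, and Q' = Q|g for some g = [[α,β],[γ,δ]] ∈ Γ_1. Then γ ≡ 0 (mod Np^m) and δ ≡ 1 (mod Np^m); in particular g ∈ Γ_m. -/

import Mathlib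

/-- injectivity step of Lemma 3.6: if `Q, Q'` are binary
quadratic forms `c x² - 2a xy - b y²`, `c' x² - 2a' xy - b' y²` with
`Np^m ∣ c, 2a, c', 2a'`, `b ≡ b' ≡ t (mod Np^m)` for a unit `t`, and
`Q' = Q|g` for `g = [[α,β],[γ,δ]] ∈ Γ₁` (congruence conditions mod `Np`),
then `γ ≡ 0` and `δ ≡ 1 (mod Np^m)`, i.e. `g ∈ Γ_m`. -/
theorem gamma_m_injectivity (N p m : ℕ) (hp : p.Prime) (hp2 : p ≠ 2)
    (hN : Odd N) (hNp : Nat.Coprime N p) (hm : 1 ≤ m) (h3 : 3 ≤ N * p)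
    (t a b c a' b' c' α β γ δ : ℤ)
    (hdet : α * δ - β * γ = 1)
    -- `g ∈ Γ₁`
    (hγ1 : (↑(N * p) : ℤ) ∣ γ)
    (hα1 : α ≡ 1 [ZMOD (N * p)]) (hδ1 : δ ≡ 1 [ZMOD (N * p)])
    -- coefficient conditions on `Q` and `Q'`
    (hc : (↑(N * p ^ m) : ℤ) ∣ c) (ha : (↑(N * p ^ m) : ℤ) ∣ 2 * a)
    (hc' : (↑(N * p ^ m) : ℤ) ∣ c') (ha' : (↑(N * p ^ m) : ℤ) ∣ 2 * a')
    (hb : b ≡ t [ZMOD (N * p ^ m)]) (hb' : b' ≡ t [ZMOD (N * p ^ m)])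
    (ht : IsUnit (t : ZMod (N * p ^ m)))
    -- `Q' = Q|g`
    (e1 : c' = c * α ^ 2 - 2 * a * α * γ - b * γ ^ 2)
    (e2 : a' = -(c * α * β) + a * β * γ + a * α * δ + b * γ * δ)
    (e3 : b' = -(c * β ^ 2) + 2 * a * β * δ + b * δ ^ 2) :
    (↑(N * p ^ m) : ℤ) ∣ γ ∧ δ ≡ 1 [ZMOD (N * p ^ m)] := by
  have hpodd : Odd p := hp.odd_of_ne_two hp2
  have hnodd : Odd (N * p ^ m) := hN.mul hpodd.pow
  have hn0 : N * p ^ m ≠ 0 := by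
    intro h
    rw [h] at hnodd
    exact (Nat.not_odd_iff_even.mpr Even.zero) hnodd
  haveI : NeZero (N * p ^ m) := ⟨hn0⟩
  set R := ZMod (N * p ^ m)
  letI : CommRing R := ZMod.commRing _
  set M : ℤ := ((N * p ^ m : ℕ) : ℤ) with hMdef
  have hcast : ((N * p ^ m : ℕ) : ℤ) = (N : ℤ) * (p : ℤ) ^ m := by push_cast; ring
  have hb2 : b ≡ t [ZMOD ((N * p ^ m : ℕ) : ℤ)] := by rw [hcast]; exact hb
  have hb'2 : b' ≡ t [ZMOD ((N * p ^ m : ℕ) : ℤ)] := by rw [hcast]; exact hb'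
  have hδNp : ((N * p : ℕ) : ℤ) ∣ δ - 1 := Int.ModEq.dvd hδ1.symm
  -- (b : R) = (t : R), so b is a unit mod N p^m
  have hbR : ((b : ℤ) : R) = ((t : ℤ) : R) := (ZMod.intCast_eq_intCast_iff b t _).mpr hb2
  have hbu : IsUnit ((b : ℤ) : R) := hbR ▸ ht
  -- Step 1 : M ∣ b (δ² - 1)
  have h1 : M ∣ b * δ ^ 2 - b := by
    have key : b * δ ^ 2 - b = (c * β ^ 2 - (2 * a) * (β * δ)) + (b' - t) - (b - t) := by
      rw [e3]; ring
    rw [key]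
    exact dvd_sub (dvd_add (dvd_sub (hc.mul_right _) (ha.mul_right _))
      (Int.ModEq.dvd hb'2.symm)) (Int.ModEq.dvd hb2.symm)
  -- δ² = 1 mod M
  have hδ2 : M ∣ (δ - 1) * (δ + 1) := by
    have h0 : ((b * δ ^ 2 - b : ℤ) : R) = 0 := (ZMod.intCast_zmod_eq_zero_iff_dvd _ _).mpr h1
    push_cast at h0
    have h0' : ((b : ℤ) : R) * (((δ : ℤ) : R) ^ 2 - 1) = 0 := by ring_nf; ring_nf at h0; linear_combination h0
    have h0'' : (((δ : ℤ) : R) ^ 2 - 1) = 0 := (hbu.mul_right_eq_zero).mp h0'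
    have : (((δ - 1) * (δ + 1) : ℤ) : R) = 0 := by push_cast; linear_combination h0''
    exact (ZMod.intCast_zmod_eq_zero_iff_dvd _ _).mp this
  -- M is coprime to δ + 1
  have hcop : IsCoprime M (δ + 1) := by
    rw [Int.isCoprime_iff_gcd_eq_one]
    by_contra hgne
    obtain ⟨q, hq, hqd⟩ := Nat.exists_prime_and_dvd hgne
    have hqM : (q : ℤ) ∣ M := dvd_trans (Int.natCast_dvd_natCast.mpr hqd) (Int.gcd_dvd_left _ _)
    have hqδ : (q : ℤ) ∣ δ + 1 := dvd_trans (Int.natCast_dvd_natCast.mpr hqd) (Int.gcd_dvd_right _ _)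
    have hqn : q ∣ N * p ^ m := Int.natCast_dvd_natCast.mp hqM
    have hqNp : q ∣ N * p := by
      rcases (Nat.Prime.dvd_mul hq).mp hqn with h | h
      · exact h.mul_right p
      · have : q = p := (Nat.prime_dvd_prime_iff_eq hq hp).mp (hq.dvd_of_dvd_pow h)
        exact this ▸ Dvd.dvd.mul_left dvd_rfl N
    have hqδ1 : (q : ℤ) ∣ δ - 1 := dvd_trans (Int.natCast_dvd_natCast.mpr hqNp) hδNp
    have hq2 : (q : ℤ) ∣ 2 := by
      have : (δ + 1) - (δ - 1) = 2 := by ring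
      exact this ▸ dvd_sub hqδ hqδ1
    have hq2' : q ∣ 2 := Int.ofNat_dvd.mp (by exact_mod_cast hq2)
    have hq2'' : q = 2 := (Nat.prime_dvd_prime_iff_eq hq Nat.prime_two).mp hq2'
    -- but N * p is odd
    have : ¬ (2 ∣ N * p) := by
      have hNpodd : Odd (N * p) := hN.mul hpodd
      rw [Nat.odd_iff] at hNpodd
      omega
    exact this (hq2'' ▸ hqNp)
  have hδm : M ∣ δ - 1 := hcop.dvd_of_dvd_mul_right hδ2
  -- Step 3 : γ ≡ 0 mod M
  have h2 : M ∣ 2 * b * δ * γ := by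
    have key : 2 * b * δ * γ = 2 * a' + c * (2 * α * β) - (2 * a) * (β * γ) - (2 * a) * (α * δ) := by
      rw [e2]; ring
    rw [key]
    exact dvd_sub (dvd_sub (dvd_add ha' (hc.mul_right _)) (ha.mul_right _)) (ha.mul_right _)
  have hδR : ((δ : ℤ) : R) = 1 := by
    have h0 : ((δ - 1 : ℤ) : R) = 0 := (ZMod.intCast_zmod_eq_zero_iff_dvd _ _).mpr hδm
    push_cast at h0
    exact sub_eq_zero.mp h0
  have hγR : ((γ : ℤ) : R) = 0 := by
    have h0 : ((2 * b * δ * γ : ℤ) : R) = 0 := (ZMod.intCast_zmod_eq_zero_iff_dvd _ _).mpr h2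
    push_cast at h0
    rw [hδR, hbR] at h0
    have h2u : IsUnit (2 : R) := by
      rw [show (2 : R) = ((2 : ℕ) : R) by norm_cast]
      rw [ZMod.isUnit_iff_coprime]
      exact hnodd.coprime_two_left
    have h0' : ((2 : R) * ((t : ℤ) : R)) * ((γ : ℤ) : R) = 0 := by
      linear_combination h0
    exact ((h2u.mul ht).mul_right_eq_zero).mp h0'
  refine ⟨(ZMod.intCast_zmod_eq_zero_iff_dvd _ _).mp hγR, ?_⟩
  have := (Int.modEq_iff_dvd.mpr hδm).symm
  rwa [hMdef, hcast] at this
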